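/- Let G be a simply-connected topological group and Γ a discrete subgroup of G. Then the map Φ : G ×_Γ (∐_{g ∈ Γ} P_g(G)) → Λ(G/Γ) defined by Φ(m, f)(t) = [m · f(t)] is a homeomorphism, where Γ acts diagonally on G × ∐_g P_g(G) by α · (m, f) = (m α^{-1}, α f α^{-1}). -/

import Mathlib

open Set unitInterval

variable {G : Type*} [Group G] [TopologicalSpace G] [IsTopologicalGroup G]

/-- `∐_{g ∈ Γ} P_g(G)`: paths in `G` from `1` to `g`, summed over `g ∈ Γ`. -/
abbrev PathsTo (G : Type*) [Group G] [TopologicalSpace G] (Γ : Subgroup G) :=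
  Σ g : Γ, {f : C(unitInterval, G) // f 0 = 1 ∧ f 1 = (g : G)}

/-- The diagonal `Γ`-action relation on `G × ∐_g P_g(G)`:
`α · (m, f) = (m α⁻¹, α f α⁻¹)`, where `Γ` acts on paths by conjugation. -/
def ConjRel (Γ : Subgroup G) (a b : G × PathsTo G Γ) : Prop :=
  ∃ α : Γ, b.1 = a.1 * (α : G)⁻¹ ∧ b.2.1 = α * a.2.1 * α⁻¹ ∧
    ∀ t, b.2.2.1 t = (α : G) * a.2.2.1 t * (α : G)⁻¹

/-- The map `(m, f) ↦ (t ↦ [m ⬝ f t])` into the free loop space of `G ⧸ Γ`,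
modeled as continuous maps `[0,1] → G ⧸ Γ` with equal endpoints. -/
def PhiPre (Γ : Subgroup G) (a : G × PathsTo G Γ) :
    {f : C(unitInterval, G ⧸ Γ) // f 0 = f 1} :=
  ⟨⟨fun t => ↑(a.1 * a.2.2.1 t),
      (continuous_quotient_mk').comp (continuous_const.mul a.2.2.1.continuous)⟩, by
    simp only [ContinuousMap.coe_mk]
    rw [a.2.2.2.1, a.2.2.2.2, mul_one, QuotientGroup.mk_mul_of_mem _ a.2.1.2]⟩

theorem phiPre_resp (Γ : Subgroup G) (a b : G × PathsTo G Γ) (h : ConjRel Γ a b) :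
    PhiPre Γ a = PhiPre Γ b := by
  obtain ⟨m, g, f, hf0, hf1⟩ := a
  obtain ⟨m', g', f', hf0', hf1'⟩ := b
  obtain ⟨α, hm, hg, hf⟩ := h
  apply Subtype.ext
  apply ContinuousMap.ext
  intro t
  simp only [PhiPre, ContinuousMap.coe_mk] at *
  rw [hm, hf t]
  have hrw : m * (α : G)⁻¹ * ((α : G) * f t * (α : G)⁻¹) = m * f t * (α : G)⁻¹ := by
    group
  rw [hrw, QuotientGroup.mk_mul_of_mem _ (inv_mem α.2)]

section FreeLoopAux

set_option linter.unusedSectionVars false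

variable (Γ : Subgroup G)

/-- From discreteness: an open set in `G` isolating a given element of `Γ`. -/
lemma exists_isol [DiscreteTopology Γ] (γ₀ : Γ) :
    ∃ V : Set G, IsOpen V ∧ (γ₀ : G) ∈ V ∧ ∀ g ∈ V, g ∈ Γ → g = (γ₀ : G) := by
  have h : IsOpen ({γ₀} : Set Γ) := isOpen_discrete _
  rw [isOpen_induced_iff] at h
  obtain ⟨V, hV, hV2⟩ := h
  refine ⟨V, hV, ?_, ?_⟩
  · have : γ₀ ∈ (Subtype.val ⁻¹' V : Set Γ) := by rw [hV2]; rfl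
    exact this
  · intro g hg hgΓ
    have h2 : (⟨g, hgΓ⟩ : Γ) ∈ (Subtype.val ⁻¹' V : Set Γ) := hg
    rw [hV2] at h2
    exact congrArg Subtype.val h2

/-- A continuous local section of `G → G ⧸ Γ` near the identity coset. -/
lemma exists_section [DiscreteTopology Γ] :
    ∃ (U : Set (G ⧸ Γ)) (sec : G ⧸ Γ → G), IsOpen U ∧ ((1 : G) : G ⧸ Γ) ∈ U ∧
      ContinuousOn sec U ∧ ∀ y ∈ U, ((sec y : G) : G ⧸ Γ) = y := by
  obtain ⟨V, hVo, hV1, hViso⟩ := exists_isol Γ 1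
  obtain ⟨V', hV'mem, hV'⟩ := exists_nhds_split_inv (hVo.mem_nhds hV1)
  set W : Set G := interior (V' ∩ V'⁻¹) with hWdef
  have hWo : IsOpen W := isOpen_interior
  have hW1 : (1 : G) ∈ W := by
    rw [mem_interior_iff_mem_nhds]
    exact Filter.inter_mem hV'mem (inv_mem_nhds_one G hV'mem)
  have hWV' : W ⊆ V' ∩ V'⁻¹ := interior_subset
  have hinj : ∀ u ∈ W, ∀ v ∈ W, ((u : G) : G ⧸ Γ) = ((v : G) : G ⧸ Γ) → u = v := by
    intro u hu v hv huv
    have hmem : u⁻¹ * v ∈ Γ := QuotientGroup.eq.mp huv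
    have h1 : u⁻¹ * v ∈ V := by
      have h2 : u⁻¹ / v⁻¹ ∈ V :=
        hV' _ ((hWV' hu).2) _ ((hWV' hv).2)
      simpa [div_eq_mul_inv] using h2
    have := hViso _ h1 hmem
    rwa [OneMemClass.coe_one, inv_mul_eq_one] at this
  -- the bijection W ≃ mk '' W
  set pW : Set (G ⧸ Γ) := (QuotientGroup.mk : G → G ⧸ Γ) '' W with hpWdef
  have hpWo : IsOpen pW := QuotientGroup.isOpenMap_coe W hWo
  let f : ↥W → ↥pW := fun u => ⟨((u : G) : G ⧸ Γ), mem_image_of_mem _ u.2⟩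
  have hfbij : Function.Bijective f := by
    constructor
    · intro u v huv
      exact Subtype.ext (hinj u u.2 v v.2 (congrArg Subtype.val huv))
    · rintro ⟨y, hy⟩
      obtain ⟨u, hu, rfl⟩ := hy
      exact ⟨⟨u, hu⟩, rfl⟩
  have hfc : Continuous f :=
    Continuous.subtype_mk (continuous_quotient_mk'.comp continuous_subtype_val) _
  have hfo : IsOpenMap f := by
    intro s hs
    rw [isOpen_induced_iff] at hs
    obtain ⟨O, hO, rfl⟩ := hs
    rw [isOpen_induced_iff]
    refine ⟨(QuotientGroup.mk : G → G ⧸ Γ) '' (O ∩ W), QuotientGroup.isOpenMap_coe _ (hO.inter hWo), ?_⟩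
    ext ⟨y, hy⟩
    simp only [mem_preimage, mem_image, mem_inter_iff, mem_image]
    constructor
    · rintro ⟨u, ⟨huO, huW⟩, hu⟩
      exact ⟨⟨u, huW⟩, huO, Subtype.ext hu⟩
    · rintro ⟨⟨u, huW⟩, huO, hu⟩
      exact ⟨u, ⟨huO, huW⟩, congrArg Subtype.val hu⟩
  let e : ↥W ≃ₜ ↥pW :=
    (Equiv.ofBijective f hfbij).toHomeomorphOfContinuousOpen hfc hfo
  classical
  refine ⟨pW, fun y => if h : y ∈ pW then (e.symm ⟨y, h⟩ : G) else 1,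
    hpWo, ⟨1, hW1, rfl⟩, ?_, ?_⟩
  · rw [continuousOn_iff_continuous_restrict]
    have : pW.domRestrict (fun y => if h : y ∈ pW then (e.symm ⟨y, h⟩ : G) else 1) =
        fun y : ↥pW => (e.symm y : G) := by
      funext y
      simp [Set.domRestrict]
    rw [this]
    exact continuous_subtype_val.comp e.symm.continuous
  · intro y hy
    simp only [dif_pos hy]
    have h1 : f (e.symm ⟨y, hy⟩) = ⟨y, hy⟩ := e.apply_symm_apply ⟨y, hy⟩
    have := congrArg Subtype.val h1
    exact this

/-- Two lifts of the same path differ by a constant element of `Γ`. -/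
lemma lift_unique [DiscreteTopology Γ] (H₁ H₂ : C(unitInterval, G))
    (h : ∀ t, ((H₁ t : G) : G ⧸ Γ) = ((H₂ t : G) : G ⧸ Γ)) :
    ∃ γ : Γ, ∀ t, H₂ t = H₁ t * γ := by
  have hmem : ∀ t, (H₁ t)⁻¹ * H₂ t ∈ Γ := fun t => QuotientGroup.eq.mp (h t)
  let d : unitInterval → Γ := fun t => ⟨(H₁ t)⁻¹ * H₂ t, hmem t⟩
  have hd : Continuous d :=
    Continuous.subtype_mk ((H₁.continuous.inv).mul H₂.continuous) _
  have hlc : IsLocallyConstant d := (IsLocallyConstant.iff_continuous d).mpr hd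
  refine ⟨d 0, fun t => ?_⟩
  have h1 : d t = d 0 := hlc.apply_eq_of_preconnectedSpace t 0
  have h2 : (H₁ t)⁻¹ * H₂ t = ((d 0 : Γ) : G) := congrArg Subtype.val h1
  rw [← h2]
  group

/-- A continuous family of lifts of paths near a given path `ℓ₀`. -/
lemma exists_lift_family [DiscreteTopology Γ] (ℓ₀ : C(unitInterval, G ⧸ Γ)) :
    ∃ N : Set C(unitInterval, G ⧸ Γ), IsOpen N ∧ ℓ₀ ∈ N ∧
      ∃ F : C(↥N × unitInterval, G),
        ∀ (ℓ : ↥N) (t : unitInterval), ((F (ℓ, t) : G) : G ⧸ Γ) = ℓ.1 t := by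
  obtain ⟨U, sec, hUo, hU1, hsecc, hsecs⟩ := exists_section Γ
  -- an open cover of the unit interval
  set c : G → Set unitInterval := fun x => ℓ₀ ⁻¹' ((fun y => x⁻¹ • y) ⁻¹' U) with hcdef
  have hc₁ : ∀ x, IsOpen (c x) := fun x =>
    (hUo.preimage (continuous_const_smul x⁻¹)).preimage ℓ₀.continuous
  have hc₂ : univ ⊆ ⋃ x, c x := by
    intro t _
    obtain ⟨g, hg⟩ := QuotientGroup.mk_surjective (ℓ₀ t)
    refine mem_iUnion.mpr ⟨g, ?_⟩
    show g⁻¹ • ℓ₀ t ∈ U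
    rw [← hg]
    show ((g⁻¹ * g : G) : G ⧸ Γ) ∈ U
    rwa [inv_mul_cancel]
  obtain ⟨s, hs0, hsmono, ⟨n, hsn⟩, hcov⟩ :=
    exists_monotone_Icc_subset_open_cover_unitInterval hc₁ hc₂
  choose x hx using hcov
  have hn : 0 < n := by
    rcases Nat.eq_zero_or_pos n with h | h
    · exfalso
      have h1 : s 0 = 1 := hsn 0 (le_of_eq h)
      rw [hs0] at h1
      exact zero_ne_one (congrArg Subtype.val h1)
    · exact h
  -- the neighborhood N
  set N : Set C(unitInterval, G ⧸ Γ) :=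
    {ℓ | ∀ k < n, ∀ t ∈ Icc (s k) (s (k + 1)), (x k)⁻¹ • ℓ t ∈ U} with hNdef
  have hNo : IsOpen N := by
    have hNeq : N = ⋂ k ∈ Finset.range n,
        {ℓ : C(unitInterval, G ⧸ Γ) |
          MapsTo ℓ (Icc (s k) (s (k + 1))) ((fun y => (x k)⁻¹ • y) ⁻¹' U)} := by
      ext ℓ
      simp only [hNdef, mem_setOf_eq, mem_iInter, Finset.mem_range, MapsTo, mem_preimage]
    rw [hNeq]
    exact isOpen_biInter_finset fun k _ =>
      ContinuousMap.isOpen_setOf_mapsTo isClosed_Icc.isCompact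
        (hUo.preimage (continuous_const_smul _))
  have hN₀ : ℓ₀ ∈ N := fun k _ t ht => hx k ht
  refine ⟨N, hNo, hN₀, ?_⟩
  -- the clamping map
  set cl : ℕ → unitInterval → unitInterval := fun k t => min (max t (s k)) (s (k + 1))
    with hcldef
  have hclc : ∀ k, Continuous (cl k) := fun k =>
    (continuous_id.max continuous_const).min continuous_const
  have hclmem : ∀ k t, cl k t ∈ Icc (s k) (s (k + 1)) := by
    intro k t
    exact ⟨le_min (le_max_right _ _) (hsmono (Nat.le_succ k)), min_le_right _ _⟩
  have hcleq : ∀ k t, t ∈ Icc (s k) (s (k + 1)) → cl k t = t := by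
    intro k t ht
    simp only [hcldef]
    rw [max_eq_left ht.1, min_eq_left ht.2]
  -- the local basic lifts
  have hBdef : ∀ k, k < n → ∃ B : C(↥N × unitInterval, G),
      (∀ q, B q = x k * sec ((x k)⁻¹ • q.1.1 (cl k q.2))) ∧
      ∀ (ℓ : ↥N) (t : unitInterval), t ∈ Icc (s k) (s (k + 1)) →
        ((B (ℓ, t) : G) : G ⧸ Γ) = ℓ.1 t := by
    intro k hk
    have hmem : ∀ q : ↥N × unitInterval, (x k)⁻¹ • q.1.1 (cl k q.2) ∈ U := fun q =>
      q.1.2 k hk (cl k q.2) (hclmem k q.2)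
    have hinner : Continuous fun q : ↥N × unitInterval => (x k)⁻¹ • q.1.1 (cl k q.2) := by
      apply (continuous_const_smul _).comp
      exact ContinuousEval.continuous_eval.comp
        ((continuous_subtype_val.comp continuous_fst).prodMk ((hclc k).comp continuous_snd))
    refine ⟨⟨fun q => x k * sec ((x k)⁻¹ • q.1.1 (cl k q.2)),
      continuous_const.mul (hsecc.comp_continuous hinner hmem)⟩, fun q => rfl, ?_⟩
    intro ℓ t ht
    show ((x k * sec ((x k)⁻¹ • ℓ.1 (cl k t)) : G) : G ⧸ Γ) = ℓ.1 t
    rw [hcleq k t ht]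
    have h1 : ((x k * sec ((x k)⁻¹ • ℓ.1 t) : G) : G ⧸ Γ)
        = x k • ((sec ((x k)⁻¹ • ℓ.1 t) : G) : G ⧸ Γ) := rfl
    rw [h1, hsecs _ (ℓ.2 k hk t ht), smul_inv_smul]
  choose B hBeq hB using hBdef
  -- inductive construction of the lift family
  have key : ∀ k, k ≤ n → ∃ F : C(↥N × unitInterval, G),
      ∀ (ℓ : ↥N) (t : unitInterval), t ≤ s k → ((F (ℓ, t) : G) : G ⧸ Γ) = ℓ.1 t := by
    intro k
    induction k with
    | zero =>
      intro _
      refine ⟨B 0 hn, fun ℓ t ht => ?_⟩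
      have ht0 : t = 0 := le_antisymm (by rwa [hs0] at ht) nonneg'
      refine hB 0 hn ℓ t ⟨?_, ?_⟩
      · rw [hs0, ht0]
      · rw [ht0, ← hs0]; exact hsmono (Nat.zero_le 1)
    | succ k IH =>
      intro hk
      obtain ⟨F, hF⟩ := IH (Nat.le_of_succ_le hk)
      have hkn : k < n := Nat.lt_of_succ_le hk
      classical
      refine ⟨⟨fun q => if q.2 ≤ s k then F q
        else B k hkn q * ((B k hkn (q.1, s k))⁻¹ * F (q.1, s k)), ?_⟩, ?_⟩
      · apply Continuous.if_le
        · exact F.continuous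
        · exact (B k hkn).continuous.mul
            (((B k hkn).continuous.comp (continuous_fst.prodMk continuous_const)).inv.mul
              (F.continuous.comp (continuous_fst.prodMk continuous_const)))
        · exact continuous_snd
        · exact continuous_const
        · rintro ⟨ℓ, t⟩ ht
          simp only at ht
          rw [ht]
          group
      · intro ℓ t ht
        by_cases h : t ≤ s k
        · simp only [ContinuousMap.coe_mk, if_pos h]
          exact hF ℓ t h
        · simp only [ContinuousMap.coe_mk, if_neg h]
          have hskt : s k ≤ t := le_of_lt (lt_of_not_ge h)
          have hγ : (B k hkn (ℓ, s k))⁻¹ * F (ℓ, s k) ∈ Γ := by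
            apply QuotientGroup.eq.mp
            rw [hB k hkn ℓ (s k) ⟨le_refl _, hsmono (Nat.le_succ k)⟩,
              hF ℓ (s k) (le_refl _)]
          rw [QuotientGroup.mk_mul_of_mem _ hγ]
          exact hB k hkn ℓ t ⟨hskt, ht⟩
  obtain ⟨F, hF⟩ := key n (le_refl n)
  refine ⟨F, fun ℓ t => hF ℓ t ?_⟩
  rw [hsn n (le_refl n)]
  exact le_one'

/-- Every path in `G ⧸ Γ` lifts to `G`. -/
lemma exists_lift [DiscreteTopology Γ] (ℓ : C(unitInterval, G ⧸ Γ)) :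
    ∃ H : C(unitInterval, G), ∀ t, ((H t : G) : G ⧸ Γ) = ℓ t := by
  obtain ⟨N, _, hN, F, hF⟩ := exists_lift_family Γ ℓ
  exact ⟨F.curry ⟨ℓ, hN⟩, fun t => by rw [ContinuousMap.curry_apply]; exact hF ⟨ℓ, hN⟩ t⟩

/-- Packaging a lift of a loop as a point of `G × PathsTo G Γ`. -/
def pack [DiscreteTopology Γ] (H : C(unitInterval, G))
    (hH : ((H 0 : G) : G ⧸ Γ) = ((H 1 : G) : G ⧸ Γ)) : G × PathsTo G Γ :=
  (H 0, ⟨⟨(H 0)⁻¹ * H 1, QuotientGroup.eq.mp hH⟩,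
    ⟨⟨fun t => (H 0)⁻¹ * H t, continuous_const.mul H.continuous⟩, by simp, rfl⟩⟩)

lemma phi_pack [DiscreteTopology Γ] (H : C(unitInterval, G)) (hH) (t : unitInterval) :
    ((PhiPre Γ (pack Γ H hH)).1 t : G ⧸ Γ) = ((H t : G) : G ⧸ Γ) := by
  show ((H 0 * ((H 0)⁻¹ * H t) : G) : G ⧸ Γ) = _
  congr 1
  group

/-- The class of `pack` does not depend on the choice of lift. -/
lemma pack_eq [DiscreteTopology Γ] (H₁ H₂ : C(unitInterval, G)) (hH₁ hH₂)
    (h : ∀ t, ((H₁ t : G) : G ⧸ Γ) = ((H₂ t : G) : G ⧸ Γ)) :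
    Quot.mk (ConjRel Γ) (pack Γ H₁ hH₁) = Quot.mk (ConjRel Γ) (pack Γ H₂ hH₂) := by
  obtain ⟨γ, hγ⟩ := lift_unique Γ H₁ H₂ h
  apply Quot.sound
  refine ⟨γ⁻¹, ?_, ?_, ?_⟩
  · show H₂ 0 = H₁ 0 * ((γ⁻¹ : Γ) : G)⁻¹
    rw [hγ 0]
    simp
  · apply Subtype.ext
    show (H₂ 0)⁻¹ * H₂ 1 = ((γ⁻¹ : Γ) : G) * ((H₁ 0)⁻¹ * H₁ 1) * (((γ⁻¹ : Γ) : G))⁻¹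
    rw [hγ 0, hγ 1]
    simp only [InvMemClass.coe_inv]
    group
  · intro t
    show (H₂ 0)⁻¹ * H₂ t = ((γ⁻¹ : Γ) : G) * ((H₁ 0)⁻¹ * H₁ t) * (((γ⁻¹ : Γ) : G))⁻¹
    rw [hγ 0, hγ t]
    simp only [InvMemClass.coe_inv]
    group

/-- The inverse map: a loop in `G ⧸ Γ` gives a class in the quotient. -/
noncomputable def Psi [DiscreteTopology Γ] (ℓ : {f : C(unitInterval, G ⧸ Γ) // f 0 = f 1}) :
    Quot (ConjRel Γ) :=
  Quot.mk (ConjRel Γ) (pack Γ (exists_lift Γ ℓ.1).choose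
    (by rw [(exists_lift Γ ℓ.1).choose_spec 0, (exists_lift Γ ℓ.1).choose_spec 1, ℓ.2]))

lemma phi_psi [DiscreteTopology Γ] (ℓ : {f : C(unitInterval, G ⧸ Γ) // f 0 = f 1}) :
    Quot.lift (PhiPre Γ) (phiPre_resp Γ) (Psi Γ ℓ) = ℓ := by
  apply Subtype.ext
  apply ContinuousMap.ext
  intro t
  show ((PhiPre Γ (pack Γ _ _)).1 t : G ⧸ Γ) = ℓ.1 t
  rw [phi_pack]
  exact (exists_lift Γ ℓ.1).choose_spec t

lemma pack_of_elt [DiscreteTopology Γ] (a : G × PathsTo G Γ)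
    (H : C(unitInterval, G)) (hH) (hHa : ∀ t, H t = a.1 * a.2.2.1 t) :
    Quot.mk (ConjRel Γ) (pack Γ H hH) = Quot.mk (ConjRel Γ) a := by
  apply Quot.sound
  have hf0 : a.2.2.1 0 = 1 := a.2.2.2.1
  have hf1 : a.2.2.1 1 = (a.2.1 : G) := a.2.2.2.2
  refine ⟨1, ?_, ?_, ?_⟩
  · show a.1 = H 0 * ((1 : Γ) : G)⁻¹
    rw [hHa 0, hf0]
    simp
  · apply Subtype.ext
    show (a.2.1 : G) = ((1 : Γ) : G) * ((H 0)⁻¹ * H 1) * ((1 : Γ) : G)⁻¹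
    rw [hHa 0, hHa 1, hf0, hf1]
    simp
  · intro t
    show a.2.2.1 t = ((1 : Γ) : G) * ((H 0)⁻¹ * H t) * ((1 : Γ) : G)⁻¹
    rw [hHa 0, hHa t, hf0]
    simp

lemma psi_phi [DiscreteTopology Γ] (q : Quot (ConjRel Γ)) :
    Psi Γ (Quot.lift (PhiPre Γ) (phiPre_resp Γ) q) = q := by
  induction q using Quot.ind with
  | _ a =>
    show Quot.mk _ (pack Γ _ _) = _
    set ℓ := PhiPre Γ a with hℓdef
    have hspec := (exists_lift Γ ℓ.1).choose_spec
    let H : C(unitInterval, G) := ⟨fun t => a.1 * a.2.2.1 t,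
      continuous_const.mul a.2.2.1.continuous⟩
    have hHlift : ∀ t, ((H t : G) : G ⧸ Γ) = ℓ.1 t := fun t => rfl
    have h1 := pack_eq Γ (exists_lift Γ ℓ.1).choose H
      (by rw [(exists_lift Γ ℓ.1).choose_spec 0, (exists_lift Γ ℓ.1).choose_spec 1, ℓ.2])
      (by rw [hHlift 0, hHlift 1, ℓ.2])
      (fun t => by rw [hspec t, hHlift t])
    rw [h1]
    exact pack_of_elt Γ a H _ (fun t => rfl)

lemma paths_proj_continuous : Continuous (fun p : PathsTo G Γ => (p.2 : C(unitInterval, G))) := by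
  apply continuous_sigma
  intro g
  exact continuous_subtype_val

lemma phiPre_continuous : Continuous (PhiPre Γ) := by
  let big : C((G × PathsTo G Γ) × unitInterval, G ⧸ Γ) :=
    ⟨fun q => ↑(q.1.1 * (q.1.2.2 : C(unitInterval, G)) q.2), by
      apply continuous_quotient_mk'.comp
      apply Continuous.mul
      · exact continuous_fst.fst
      · exact ContinuousEval.continuous_eval.comp
          (((paths_proj_continuous Γ).comp (continuous_snd.comp continuous_fst)).prodMk
            continuous_snd)⟩
  have hcurry : Continuous fun a : G × PathsTo G Γ => big.curry a := big.curry.continuous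
  exact Continuous.subtype_mk hcurry _

lemma psi_continuous [DiscreteTopology Γ] : Continuous (Psi Γ) := by
  rw [continuous_iff_continuousAt]
  intro ℓ₀
  obtain ⟨N, hNo, hN₀, F, hF⟩ := exists_lift_family Γ ℓ₀.1
  -- the "holonomy" function on N
  set gf : ↥N → G := fun ℓ => (F (ℓ, 0))⁻¹ * F (ℓ, 1) with hgfdef
  have hgfc : Continuous gf :=
    ((F.continuous.comp (continuous_id.prodMk continuous_const)).inv).mul
      (F.continuous.comp (continuous_id.prodMk continuous_const))
  have hγ₀mem : gf ⟨ℓ₀.1, hN₀⟩ ∈ Γ := by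
    apply QuotientGroup.eq.mp
    rw [hF ⟨ℓ₀.1, hN₀⟩ 0, hF ⟨ℓ₀.1, hN₀⟩ 1]
    exact ℓ₀.2
  set γ₀ : Γ := ⟨gf ⟨ℓ₀.1, hN₀⟩, hγ₀mem⟩ with hγ₀def
  obtain ⟨V, hVo, hVγ, hViso⟩ := exists_isol Γ γ₀
  -- the neighborhood O of ℓ₀ in the loop space
  set M : Set C(unitInterval, G ⧸ Γ) := Subtype.val '' (gf ⁻¹' V) with hMdef
  have hMo : IsOpen M := hNo.isOpenMap_subtype_val _ (hVo.preimage hgfc)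
  have hMN : M ⊆ N := by
    rintro ℓ ⟨z, _, rfl⟩
    exact z.2
  set O : Set {f : C(unitInterval, G ⧸ Γ) // f 0 = f 1} := Subtype.val ⁻¹' M with hOdef
  have hOo : IsOpen O := hMo.preimage continuous_subtype_val
  have hℓ₀O : ℓ₀ ∈ O := ⟨⟨ℓ₀.1, hN₀⟩, hVγ, rfl⟩
  apply ContinuousOn.continuousAt _ (hOo.mem_nhds hℓ₀O)
  rw [continuousOn_iff_continuous_restrict]
  -- the embedding O → ↥N
  set e : ↥O → ↥N := fun ℓ => ⟨ℓ.1.1, hMN ℓ.2⟩ with hedef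
  have hec : Continuous e :=
    Continuous.subtype_mk (continuous_subtype_val.comp continuous_subtype_val) _
  have hgfe : ∀ ℓ : ↥O, gf (e ℓ) = (γ₀ : G) := by
    intro ℓ
    obtain ⟨z, hzV, hz⟩ := ℓ.2
    have hze : z = e ℓ := Subtype.ext hz
    have hmem : gf (e ℓ) ∈ Γ := by
      apply QuotientGroup.eq.mp
      rw [hF (e ℓ) 0, hF (e ℓ) 1]
      exact ℓ.1.2
    exact hViso _ (hze ▸ hzV) hmem
  -- the explicit continuous representative
  set F₂ : C(↥N × unitInterval, G) :=
    ⟨fun q => (F (q.1, 0))⁻¹ * F q,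
      ((F.continuous.comp (continuous_fst.prodMk continuous_const)).inv).mul
        F.continuous⟩ with hF₂def
  have hsub : ∀ ℓ : ↥O, (F₂.curry (e ℓ)) 0 = 1 ∧ (F₂.curry (e ℓ)) 1 = (γ₀ : G) := by
    intro ℓ
    constructor
    · show (F (e ℓ, 0))⁻¹ * F (e ℓ, 0) = 1
      group
    · exact hgfe ℓ
  set φ' : ↥O → G × PathsTo G Γ :=
    fun ℓ => (F (e ℓ, 0), ⟨γ₀, ⟨F₂.curry (e ℓ), hsub ℓ⟩⟩) with hφ'def
  have hφ'c : Continuous φ' := by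
    apply Continuous.prodMk
    · exact F.continuous.comp (hec.prodMk continuous_const)
    · exact continuous_sigmaMk.comp
        (Continuous.subtype_mk (F₂.curry.continuous.comp hec) _)
  have hkey : O.domRestrict (Psi Γ) = (Quot.mk (ConjRel Γ)) ∘ φ' := by
    funext ℓ
    show Psi Γ ℓ.1 = Quot.mk _ (φ' ℓ)
    have hHℓ : ∀ t, ((F.curry (e ℓ) t : G) : G ⧸ Γ) = ℓ.1.1 t := by
      intro t
      rw [ContinuousMap.curry_apply]
      exact hF (e ℓ) t
    have h1 : Psi Γ ℓ.1 = Quot.mk _ (pack Γ (F.curry (e ℓ))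
        (by rw [hHℓ 0, hHℓ 1, ℓ.1.2])) := by
      apply pack_eq
      intro t
      rw [(exists_lift Γ ℓ.1.1).choose_spec t, hHℓ t]
    rw [h1]
    apply Quot.sound
    refine ⟨1, ?_, ?_, ?_⟩
    · show F (e ℓ, 0) = F.curry (e ℓ) 0 * ((1 : Γ) : G)⁻¹
      simp [ContinuousMap.curry_apply]
    · apply Subtype.ext
      show (γ₀ : G) = ((1 : Γ) : G) * ((F.curry (e ℓ) 0)⁻¹ * F.curry (e ℓ) 1) * ((1 : Γ) : G)⁻¹
      simp only [ContinuousMap.curry_apply, OneMemClass.coe_one, one_mul, inv_one, mul_one]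
      exact (hgfe ℓ).symm
    · intro t
      show F₂.curry (e ℓ) t = ((1 : Γ) : G) * ((F.curry (e ℓ) 0)⁻¹ * F.curry (e ℓ) t) * ((1 : Γ) : G)⁻¹
      simp only [ContinuousMap.curry_apply, OneMemClass.coe_one, one_mul, inv_one, mul_one]
      rfl
  rw [hkey]
  exact continuous_quot_mk.comp hφ'c

end FreeLoopAux

/-- For a simply-connected topological group `G` and a discrete subgroup `Γ`, the map
`Φ : G ×_Γ (∐_{g ∈ Γ} P_g(G)) → Λ(G/Γ)`, `Φ(m, f)(t) = [m ⬝ f(t)]`, is a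
homeomorphism onto the free loop space of `G ⧸ Γ`. -/
theorem free_loop_space_of_quotient_homeomorph
    (Γ : Subgroup G) [SimplyConnectedSpace G] [DiscreteTopology Γ] :
    IsHomeomorph (Quot.lift (PhiPre Γ) (phiPre_resp Γ) :
      Quot (ConjRel Γ) → {f : C(unitInterval, G ⧸ Γ) // f 0 = f 1}) := by
  let h : Quot (ConjRel Γ) ≃ₜ {f : C(unitInterval, G ⧸ Γ) // f 0 = f 1} :=
    { toFun := Quot.lift (PhiPre Γ) (phiPre_resp Γ)
      invFun := Psi Γ
      left_inv := psi_phi Γ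
      right_inv := phi_psi Γ
      continuous_toFun := continuous_quot_lift _ (phiPre_continuous Γ)
      continuous_invFun := psi_continuous Γ }
  exact h.isHomeomorph
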